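/- Assume G is connected, n ≥ 3, and (G;C) is twin free. Then for u ∈ V and i ∈ {1,…,m−1}, the inequality x_{u,i+1} ≤ x_{u,i} is facet-defining for P if and only if there is no v ∈ V with N⟨v⟩ = {u} (equivalently, every leaf of G adjacent to u belongs to C). -/

import Mathlib

open Finset

namespace LegalSeq

variable {V : Type*}

/-- The generalized neighborhood `N⟨v⟩`: the closed neighborhood of `v` if `v ∈ C`,
the open neighborhood otherwise. -/
noncomputable def gN [Fintype V] (G : SimpleGraph V) (C : Set V) (v : V) : Finset V := by
  classical
  exact (Set.toFinite (if v ∈ C then insert v (G.neighborSet v) else G.neighborSet v)).toFinset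

/-- The ambient space `ℝ^{V×{1,…,m}} × ℝ^{V×{1,…,m}}` of the polytope of legal sequences. -/
abbrev Pt (V : Type*) (m : ℕ) := (V × Fin m → ℝ) × (V × Fin m → ℝ)

/-- Feasible 0/1 pairs `(x, y)` of the formulation `F₁` (constraints (1)-(5)). -/
def Feasible [Fintype V] (G : SimpleGraph V) (C : Set V) (m : ℕ) : Set (Pt V m) :=
  { p | (∀ q, p.1 q = 0 ∨ p.1 q = 1) ∧ (∀ q, p.2 q = 0 ∨ p.2 q = 1) ∧
    (∀ i : Fin m, ∑ v : V, p.2 (v, i) ≤ 1) ∧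
    (∀ v : V, ∑ i : Fin m, p.2 (v, i) ≤ 1) ∧
    (∀ (v : V) (i : Fin m) (h : i.1 + 1 < m),
        p.2 (v, ⟨i.1 + 1, h⟩) ≤ ∑ u ∈ gN G C v, (p.1 (u, i) - p.1 (u, ⟨i.1 + 1, h⟩))) ∧
    (∀ (u : V) (i : Fin m), p.1 (u, i) + ∑ v ∈ gN G C u, p.2 (v, i) ≤ 1) ∧
    (∀ (u : V) (i : Fin m) (h : i.1 + 1 < m), p.1 (u, ⟨i.1 + 1, h⟩) ≤ p.1 (u, i)) }

section Aux

variable [Fintype V] [DecidableEq V] (G : SimpleGraph V) (C : Set V) (m : ℕ)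

lemma mem_gN {v w : V} : w ∈ gN G C v ↔ (G.Adj v w ∨ (v ∈ C ∧ w = v)) := by
  classical
  simp only [gN, Set.Finite.mem_toFinset]
  by_cases hv : v ∈ C <;> simp [hv, SimpleGraph.mem_neighborSet, or_comm, eq_comm]

lemma gN_nonempty (hiso : ∀ w : V, w ∉ C → ∃ z, G.Adj w z) (v : V) :
    (gN G C v).Nonempty := by
  by_cases hv : v ∈ C
  · exact ⟨v, (mem_gN G C).2 (Or.inr ⟨hv, rfl⟩)⟩
  · obtain ⟨z, hz⟩ := hiso v hv
    exact ⟨z, (mem_gN G C).2 (Or.inl hz)⟩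

/-- staircase point: vertex `w` chosen at all times `< t`. -/
def Xpt (w : V) (t : ℕ) : Pt V m :=
  (fun q => if q.1 = w ∧ q.2.1 < t then 1 else 0, 0)

/-- single-`y` point: `y_{v,j} = 1`, supported by staircase of `w₀` below `j`. -/
def Ypt (v : V) (j : Fin m) (w₀ : V) : Pt V m :=
  ((Xpt m w₀ j.1).1, Pi.single (v, j) 1)

lemma feas_Xpt (w : V) (t : ℕ) : Xpt m w t ∈ Feasible G C m := by
  refine ⟨fun q => ?_, fun q => Or.inl rfl, fun i => by simp [Xpt],
    fun v => by simp [Xpt], fun v i hi => ?_, fun v i => ?_, fun v i hi => ?_⟩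
  · dsimp [Xpt]; split <;> simp
  · refine le_trans (by simp [Xpt]) (Finset.sum_nonneg fun w' _ => ?_)
    dsimp [Xpt]
    rw [sub_nonneg]
    split_ifs with h1 h2 <;> try norm_num
    exact absurd ⟨h1.1, by omega⟩ h2
  · simp only [Xpt, Pi.zero_apply, Finset.sum_const_zero, add_zero]
    split <;> norm_num
  · dsimp [Xpt]
    split_ifs with h1 h2 <;> try norm_num
    exact absurd ⟨h1.1, by omega⟩ h2

lemma feas_Ypt (v : V) (j : Fin m) (w₀ : V) (hw : w₀ ∈ gN G C v) :
    Ypt m v j w₀ ∈ Feasible G C m := by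
  classical
  refine ⟨fun q => ?_, fun q => ?_, fun i => ?_, fun v' => ?_, fun v' i hi => ?_,
    fun v' i => ?_, fun v' i hi => ?_⟩
  · dsimp [Ypt, Xpt]; split <;> simp
  · dsimp [Ypt]
    rcases eq_or_ne q (v, j) with rfl | hq
    · simp
    · simp [Pi.single_apply, hq]
  · dsimp [Ypt]
    simp only [Pi.single_apply, Prod.mk.injEq, ite_and]
    rw [Finset.sum_ite_eq' Finset.univ v (fun _ => if i = j then (1:ℝ) else 0)]
    split_ifs <;> norm_num
  · dsimp [Ypt]
    simp only [Pi.single_apply, Prod.mk.injEq]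
    by_cases hv' : v' = v
    · subst hv'
      simp only [true_and]
      rw [Finset.sum_ite_eq' Finset.univ j (fun _ => (1:ℝ))]
      split_ifs <;> norm_num
    · simp [hv']
  · dsimp [Ypt, Xpt]
    rcases eq_or_ne ((v' : V), (⟨i.1 + 1, hi⟩ : Fin m)) (v, j) with heq | hne
    · rw [heq, Pi.single_eq_same]
      obtain ⟨hv', hj⟩ := Prod.mk.injEq .. ▸ heq
      have hj1 : j.1 = i.1 + 1 := by rw [← hj]
      subst hv'
      have : ∀ w' ∈ gN G C v',
          ((if w' = w₀ ∧ i.1 < j.1 then (1:ℝ) else 0) -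
            (if w' = w₀ ∧ i.1 + 1 < j.1 then (1:ℝ) else 0)) = if w' = w₀ then 1 else 0 := by
        intro w' _
        split_ifs with h1 h2 h3 <;> simp_all <;> omega
      rw [Finset.sum_congr rfl this, Finset.sum_ite_eq' (gN G C v') w₀ (fun _ => (1:ℝ))]
      simp [hw]
    · rw [Pi.single_eq_of_ne hne]
      refine Finset.sum_nonneg fun w' _ => ?_
      rw [sub_nonneg]
      split_ifs with h1 h2 <;> try norm_num
      exact absurd ⟨h1.1, by omega⟩ h2
  · dsimp [Ypt, Xpt]
    simp only [Pi.single_apply, Prod.mk.injEq, ite_and]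
    rw [Finset.sum_ite_eq' (gN G C v') v (fun _ => if i = j then (1:ℝ) else 0)]
    by_cases hij : i = j
    · subst hij
      split_ifs <;> simp_all
    · simp only [hij, if_false]
      split_ifs <;> norm_num
  · dsimp [Ypt, Xpt]
    split_ifs with h1 h2 <;> try norm_num
    exact absurd ⟨h1.1, by omega⟩ h2

lemma Xpt_fst_sub (w : V) (t : ℕ) (jq : Fin m) (ht : jq.1 = t) (q : V × Fin m) :
    (Xpt m w (t + 1)).1 q - (Xpt m w t).1 q = (Pi.single (w, jq) 1 : V × Fin m → ℝ) q := by
  obtain ⟨a, b⟩ := q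
  dsimp [Xpt]
  rw [Pi.single_apply]
  simp only [Prod.mk.injEq, Fin.ext_iff, ht]
  by_cases ha : a = w
  · subst ha
    simp only [true_and]
    split_ifs <;> first | (exfalso; omega) | norm_num
  · simp [ha]

lemma Xpt_fst_sub2 (w : V) (t : ℕ) (jq jq' : Fin m) (ht : jq.1 = t) (ht' : jq'.1 = t + 1)
    (q : V × Fin m) :
    (Xpt m w (t + 2)).1 q - (Xpt m w t).1 q =
      (Pi.single (w, jq) 1 : V × Fin m → ℝ) q + (Pi.single (w, jq') 1 : V × Fin m → ℝ) q := by
  obtain ⟨a, b⟩ := q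
  dsimp [Xpt]
  rw [Pi.single_apply, Pi.single_apply]
  simp only [Prod.mk.injEq, Fin.ext_iff, ht, ht']
  by_cases ha : a = w
  · subst ha
    simp only [true_and]
    split_ifs <;> first | (exfalso; omega) | norm_num
  · simp [ha]

end Aux

/-- The polytope of legal sequences: the convex hull of the feasible 0/1 pairs. -/
noncomputable def poly [Fintype V] (G : SimpleGraph V) (C : Set V) (m : ℕ) : Set (Pt V m) :=
  convexHull ℝ (Feasible G C m)

/-- `δ(G;C)`, the minimum cardinality of a generalized neighborhood. -/
noncomputable def gdelta [Fintype V] (G : SimpleGraph V) (C : Set V) : ℕ :=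
  sInf (Set.range fun v : V => (gN G C v).card)

/-- The instance `(G;C)` is twin free if distinct vertices have distinct
generalized neighborhoods. -/
def TwinFree [Fintype V] (G : SimpleGraph V) (C : Set V) : Prop :=
  ∀ u v : V, u ≠ v → gN G C u ≠ gN G C v

/-- The inequality `f p ≤ a` is valid for the polytope and the face it defines has affine
dimension `2nm - 1`, i.e. it is facet-defining. -/
def IsFacet [Fintype V] (G : SimpleGraph V) (C : Set V) (m : ℕ)
    (f : Pt V m → ℝ) (a : ℝ) : Prop :=
  (∀ p ∈ poly G C m, f p ≤ a) ∧
  Module.finrank ℝ ((affineSpan ℝ {p ∈ poly G C m | f p = a}).direction) =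
    2 * Fintype.card V * m - 1

/-- For `G` connected, `n ≥ 3`, `(G;C)` twin free: constraint (5),
`x_{u,i+1} ≤ x_{u,i}`, is facet-defining for `P` iff no vertex `v` satisfies `N⟨v⟩ = {u}`. -/
theorem mono_facet_iff [Fintype V] (G : SimpleGraph V) (C : Set V)
    (hconn : G.Connected) (hcard : 3 ≤ Fintype.card V)
    (hiso : ∀ w : V, w ∉ C → ∃ z, G.Adj w z)
    (htf : TwinFree G C)
    (m : ℕ) (hm : m = Fintype.card V - gdelta G C + 1)
    (u : V) (i : Fin m) (h : i.1 + 1 < m) :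
    IsFacet G C m (fun p => p.1 (u, ⟨i.1 + 1, h⟩) - p.1 (u, i)) 0 ↔
      ¬ ∃ v : V, gN G C v = {u} := by
  classical
  clear hm hconn htf
  set jf : Fin m := ⟨i.1 + 1, h⟩ with hjf
  have hij : ((u, i) : V × Fin m) ≠ (u, jf) := by
    simp only [ne_eq, Prod.mk.injEq, Fin.ext_iff, hjf]
    omega
  let g1 : Pt V m →ₗ[ℝ] ℝ :=
    { toFun := fun p => p.1 (u, jf) - p.1 (u, i)
      map_add' := fun p q => by
        simp only [Prod.fst_add, Pi.add_apply]
        ring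
      map_smul' := fun c p => by
        simp only [Prod.smul_fst, Pi.smul_apply, smul_eq_mul, RingHom.id_apply]
        ring }
  have hg1 : ∀ p : Pt V m, g1 p = p.1 (u, jf) - p.1 (u, i) := fun p => rfl
  have hPt : Module.finrank ℝ (Pt V m) = 2 * Fintype.card V * m := by
    rw [Module.finrank_prod, Module.finrank_fintype_fun_eq_card, Fintype.card_prod,
      Fintype.card_fin]
    ring
  have hg1surj : Function.Surjective g1 := by
    intro a
    refine ⟨((Pi.single (u, jf) a : V × Fin m → ℝ), 0), ?_⟩
    rw [hg1]
    dsimp only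
    rw [Pi.single_eq_same, Pi.single_eq_of_ne hij, sub_zero]
  have hker1 : Module.finrank ℝ (LinearMap.ker g1) = 2 * Fintype.card V * m - 1 := by
    have h1 := g1.finrank_range_add_finrank_ker
    rw [LinearMap.range_eq_top.2 hg1surj, finrank_top, Module.finrank_self, hPt] at h1
    omega
  constructor
  · -- facet → no vertex v with N⟨v⟩ = {u}
    rintro ⟨hval, hdim⟩ ⟨v, hv⟩
    let g2 : Pt V m →ₗ[ℝ] ℝ :=
      { toFun := fun p => p.2 (v, jf)
        map_add' := fun p q => by simp only [Prod.snd_add, Pi.add_apply]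
        map_smul' := fun c p => by
          simp only [Prod.smul_snd, Pi.smul_apply, smul_eq_mul, RingHom.id_apply] }
    have hg2 : ∀ p : Pt V m, g2 p = p.2 (v, jf) := fun p => rfl
    have hv1 : ∀ p ∈ poly G C m, 0 ≤ g2 p := by
      intro p hp
      refine convexHull_min (fun q hq => ?_) (convex_halfSpace_ge g2.isLinear 0) hp
      rcases hq.2.1 (v, jf) with h0 | h0 <;> rw [Set.mem_setOf_eq, hg2, h0] <;> norm_num
    have hv2 : ∀ p ∈ poly G C m, (g1 + g2) p ≤ 0 := by
      intro p hp
      refine convexHull_min (fun q hq => ?_) (convex_halfSpace_le (g1 + g2).isLinear 0) hp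
      have h3 := hq.2.2.2.2.1 v i h
      rw [hv, Finset.sum_singleton] at h3
      rw [Set.mem_setOf_eq, LinearMap.add_apply, hg1, hg2]
      rw [← hjf] at h3
      linarith
    let Φ : Pt V m →ₗ[ℝ] ℝ × ℝ := g1.prod g2
    have hΦsurj : Function.Surjective Φ := by
      rintro ⟨a, b⟩
      refine ⟨((Pi.single (u, jf) a : V × Fin m → ℝ), (Pi.single (v, jf) b : V × Fin m → ℝ)), ?_⟩
      have hΦ : Φ ((Pi.single (u, jf) a : V × Fin m → ℝ),
          (Pi.single (v, jf) b : V × Fin m → ℝ)) =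
          (g1 ((Pi.single (u, jf) a : V × Fin m → ℝ), (Pi.single (v, jf) b : V × Fin m → ℝ)),
           g2 ((Pi.single (u, jf) a : V × Fin m → ℝ), (Pi.single (v, jf) b : V × Fin m → ℝ))) :=
        rfl
      rw [hΦ, hg1, hg2]
      dsimp only
      rw [Pi.single_eq_same, Pi.single_eq_of_ne hij, sub_zero, Pi.single_eq_same]
    have hkerΦ : Module.finrank ℝ (LinearMap.ker Φ) = 2 * Fintype.card V * m - 2 := by
      have h1 := Φ.finrank_range_add_finrank_ker
      rw [LinearMap.range_eq_top.2 hΦsurj, finrank_top, Module.finrank_prod,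
        Module.finrank_self, hPt] at h1
      omega
    have hdirle : (affineSpan ℝ
        {p ∈ poly G C m | (fun p : Pt V m => p.1 (u, jf) - p.1 (u, i)) p = 0}).direction ≤
        LinearMap.ker Φ := by
      rw [direction_affineSpan]
      refine Submodule.span_le.2 ?_
      rintro x hx
      rw [Set.mem_vsub] at hx
      obtain ⟨p, hp, q, hq, rfl⟩ := hx
      have hmem : ∀ r ∈ {p ∈ poly G C m | (fun p : Pt V m => p.1 (u, jf) - p.1 (u, i)) p = 0},
          Φ r = 0 := by
        rintro r ⟨hr, hr0⟩
        have e1 : g1 r = 0 := by rw [hg1]; exact hr0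
        have e2 : g2 r = 0 := by
          have hle := hv2 r hr
          rw [LinearMap.add_apply, e1, zero_add] at hle
          exact le_antisymm hle (hv1 r hr)
        have : Φ r = (g1 r, g2 r) := rfl
        rw [this, e1, e2]
        rfl
      have : p -ᵥ q = p - q := rfl
      rw [this, SetLike.mem_coe, LinearMap.mem_ker, map_sub, hmem p hp, hmem q hq, sub_zero]
    have hcon := Submodule.finrank_mono hdirle
    rw [hdim, hkerΦ] at hcon
    have hm2 : 2 ≤ m := by omega
    have h6 : 3 * 2 ≤ Fintype.card V * m := Nat.mul_le_mul hcard hm2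
    have hrw : 2 * Fintype.card V * m = 2 * (Fintype.card V * m) := by ring
    rw [hrw] at hcon
    omega
  · -- no vertex v with N⟨v⟩ = {u} → facet
    intro hno
    have hW : ∀ v : V, ∃ w₀ ∈ gN G C v, w₀ ≠ u := by
      intro v
      obtain ⟨w, hw⟩ := gN_nonempty G C hiso v
      by_contra hcon
      push_neg at hcon
      exact hno ⟨v, Finset.eq_singleton_iff_nonempty_unique_mem.2
        ⟨⟨w, hw⟩, fun x hx => hcon x hx⟩⟩
    constructor
    · intro p hp
      refine convexHull_min (fun q hq => ?_) (convex_halfSpace_le g1.isLinear 0) hp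
      have := hq.2.2.2.2.2.2 u i h
      show q.1 (u, jf) - q.1 (u, i) ≤ 0
      rw [hjf]
      linarith
    · -- dimension count
      set S : Set (Pt V m) :=
        {p ∈ poly G C m | (fun p : Pt V m => p.1 (u, jf) - p.1 (u, i)) p = 0} with hS
      set D : Submodule ℝ (Pt V m) := (affineSpan ℝ S).direction with hD
      have hXS : ∀ (w : V) (t : ℕ), ¬(w = u ∧ t = i.1 + 1) → Xpt m w t ∈ S := by
        intro w t hwt
        refine ⟨subset_convexHull ℝ _ (feas_Xpt G C m w t), ?_⟩
        dsimp [Xpt]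
        rcases eq_or_ne u w with rfl | hw
        · have ht : t ≠ i.1 + 1 := fun hc => hwt ⟨rfl, hc⟩
          have hjv : jf.1 = i.1 + 1 := rfl
          simp only [true_and]
          split_ifs <;> first | (exfalso; omega) | norm_num
        · simp [hw]
      have hYS : ∀ (v : V) (j : Fin m) (w₀ : V), w₀ ∈ gN G C v → w₀ ≠ u →
          Ypt m v j w₀ ∈ S := by
        intro v j w₀ hw₀ hwu
        refine ⟨subset_convexHull ℝ _ (feas_Ypt G C m v j w₀ hw₀), ?_⟩
        dsimp [Ypt, Xpt]
        simp [Ne.symm hwu]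
      have hd : ∀ p ∈ S, ∀ q ∈ S, p - q ∈ D := by
        intro p hp q hq
        rw [hD, direction_affineSpan]
        exact vsub_mem_vectorSpan ℝ hp hq
      set exu : Pt V m := ((Pi.single (u, i) 1 : V × Fin m → ℝ), 0) with hexu
      have htople : (⊤ : Submodule ℝ (Pt V m)) ≤ D ⊔ Submodule.span ℝ {exu} := by
        rw [← Module.Basis.span_eq ((Pi.basisFun ℝ (V × Fin m)).prod (Pi.basisFun ℝ (V × Fin m)))]
        refine Submodule.span_le.2 ?_
        rintro x ⟨idx, rfl⟩
        rcases idx with q | q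
        · -- x-part unit vectors
          have hx : ((Pi.basisFun ℝ (V × Fin m)).prod (Pi.basisFun ℝ (V × Fin m))) (Sum.inl q) =
              ((Pi.single q 1 : V × Fin m → ℝ), 0) := by
            refine Prod.ext ?_ ?_
            · rw [Module.Basis.prod_apply_inl_fst, Pi.basisFun_apply]
            · rw [Module.Basis.prod_apply_inl_snd]
          rw [hx]
          obtain ⟨w, jq⟩ := q
          rcases eq_or_ne u w with rfl | hwu
          · rcases eq_or_ne jq i with rfl | hji
            · exact Submodule.mem_sup_right (Submodule.subset_span rfl)
            rcases eq_or_ne jq jf with rfl | hjf'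
            · -- e_x(u, i+1) = (Xpt u (i+2) - Xpt u i) - exu
              have hdm : Xpt m u (i.1 + 2) - Xpt m u i.1 ∈ D :=
                hd _ (hXS u (i.1 + 2) (by omega)) _ (hXS u i.1 (by omega))
              have heq : ((Pi.single ((u, jf) : V × Fin m) 1 : V × Fin m → ℝ),
                  (0 : V × Fin m → ℝ)) = (Xpt m u (i.1 + 2) - Xpt m u i.1) - exu := by
                refine Prod.ext ?_ ?_
                · simp only [Prod.fst_sub, hexu]
                  funext r
                  simp only [Pi.sub_apply]
                  rw [Xpt_fst_sub2 m u i.1 i jf rfl rfl r]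
                  ring
                · simp only [Prod.snd_sub, hexu, Xpt]
                  simp
              rw [heq]
              exact Submodule.sub_mem _ (Submodule.mem_sup_left hdm)
                (Submodule.mem_sup_right (Submodule.subset_span rfl))
            · -- generic time at vertex u
              have h1 : ¬(u = u ∧ jq.1 + 1 = i.1 + 1) := by
                rintro ⟨-, hc⟩
                exact hji (Fin.ext (by omega))
              have h2 : ¬(u = u ∧ jq.1 = i.1 + 1) := by
                rintro ⟨-, hc⟩
                exact hjf' (Fin.ext (by rw [hjf]; exact hc))
              have hdm : Xpt m u (jq.1 + 1) - Xpt m u jq.1 ∈ D :=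
                hd _ (hXS u (jq.1 + 1) h1) _ (hXS u jq.1 h2)
              have heq : ((Pi.single ((u, jq) : V × Fin m) 1 : V × Fin m → ℝ),
                  (0 : V × Fin m → ℝ)) = Xpt m u (jq.1 + 1) - Xpt m u jq.1 := by
                refine Prod.ext ?_ ?_
                · simp only [Prod.fst_sub]
                  funext r
                  simp only [Pi.sub_apply]
                  rw [Xpt_fst_sub m u jq.1 jq rfl r]
                · simp only [Prod.snd_sub, Xpt]
                  simp
              rw [heq]
              exact Submodule.mem_sup_left hdm
          · -- vertex ≠ u
            have hne' : ∀ t : ℕ, ¬(w = u ∧ t = i.1 + 1) := fun t hc => Ne.symm hwu hc.1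
            have hdm : Xpt m w (jq.1 + 1) - Xpt m w jq.1 ∈ D :=
              hd _ (hXS w (jq.1 + 1) (hne' _)) _ (hXS w jq.1 (hne' _))
            have heq : ((Pi.single ((w, jq) : V × Fin m) 1 : V × Fin m → ℝ),
                (0 : V × Fin m → ℝ)) = Xpt m w (jq.1 + 1) - Xpt m w jq.1 := by
              refine Prod.ext ?_ ?_
              · simp only [Prod.fst_sub]
                funext r
                simp only [Pi.sub_apply]
                rw [Xpt_fst_sub m w jq.1 jq rfl r]
              · simp only [Prod.snd_sub, Xpt]
                simp
            rw [heq]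
            exact Submodule.mem_sup_left hdm
        · -- y-part unit vectors
          have hx : ((Pi.basisFun ℝ (V × Fin m)).prod (Pi.basisFun ℝ (V × Fin m))) (Sum.inr q) =
              ((0 : V × Fin m → ℝ), (Pi.single q 1 : V × Fin m → ℝ)) := by
            refine Prod.ext ?_ ?_
            · rw [Module.Basis.prod_apply_inr_fst]
            · rw [Module.Basis.prod_apply_inr_snd, Pi.basisFun_apply]
          rw [hx]
          obtain ⟨v, jq⟩ := q
          obtain ⟨w₀, hw₀, hwu⟩ := hW v
          have h1 : Ypt m v jq w₀ ∈ S := hYS v jq w₀ hw₀ hwu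
          have h2 : Xpt m w₀ jq.1 ∈ S := hXS w₀ jq.1 (fun hc => hwu hc.1)
          have heq : ((0 : V × Fin m → ℝ), (Pi.single ((v, jq) : V × Fin m) 1 : V × Fin m → ℝ)) =
              Ypt m v jq w₀ - Xpt m w₀ jq.1 := by
            refine Prod.ext ?_ ?_
            · simp only [Prod.fst_sub, Ypt]
              simp
            · simp only [Prod.snd_sub, Ypt, Xpt]
              simp
          rw [heq]
          exact Submodule.mem_sup_left (hd _ h1 _ h2)
      have hupper : D ≤ LinearMap.ker g1 := by
        rw [hD, direction_affineSpan]
        refine Submodule.span_le.2 ?_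
        rintro x hx
        rw [Set.mem_vsub] at hx
        obtain ⟨p, hp, q, hq, rfl⟩ := hx
        have hpq : p -ᵥ q = p - q := rfl
        have hp2 : p.1 (u, jf) - p.1 (u, i) = 0 := hp.2
        have hq2 : q.1 (u, jf) - q.1 (u, i) = 0 := hq.2
        have hz : g1 (p - q) = 0 := by
          rw [map_sub, hg1, hg1, hp2, hq2, sub_zero]
        rw [hpq]
        exact hz
      have hle : Module.finrank ℝ D ≤ 2 * Fintype.card V * m - 1 := by
        have hmono := Submodule.finrank_mono hupper
        exact hmono.trans (le_of_eq hker1)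
      have hexune : exu ≠ 0 := by
        intro hc
        have := congrFun (congrArg Prod.fst hc) (u, i)
        rw [hexu] at this
        simp at this
      have hge : 2 * Fintype.card V * m - 1 ≤ Module.finrank ℝ D := by
        have h1 : Module.finrank ℝ (D ⊔ Submodule.span ℝ {exu} : Submodule ℝ (Pt V m)) =
            2 * Fintype.card V * m := by
          rw [le_antisymm le_top htople, finrank_top, hPt]
        have h2 := Submodule.finrank_sup_add_finrank_inf_eq D (Submodule.span ℝ {exu})
        have h3 : Module.finrank ℝ (Submodule.span ℝ ({exu} : Set (Pt V m))) = 1 :=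
          finrank_span_singleton hexune
        have h4 : 2 * Fintype.card V * m ≤ Module.finrank ℝ D + 1 := by
          rw [← h1]
          calc Module.finrank ℝ (D ⊔ Submodule.span ℝ {exu} : Submodule ℝ (Pt V m))
              ≤ Module.finrank ℝ (D ⊔ Submodule.span ℝ {exu} : Submodule ℝ (Pt V m)) +
                Module.finrank ℝ (D ⊓ Submodule.span ℝ {exu} : Submodule ℝ (Pt V m)) :=
              Nat.le_add_right _ _
            _ = Module.finrank ℝ D +
                Module.finrank ℝ (Submodule.span ℝ ({exu} : Set (Pt V m))) := h2
            _ = Module.finrank ℝ D + 1 := by rw [h3]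
        omega
      exact le_antisymm hle hge

end LegalSeq
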